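/- arXiv:2209.13147 — 5 statements merged into one kernel-verified Lean document; each statement's English description precedes it below -/
import Mathlib

section
/- Let A be an n×n matrix with entries in {0,1}, n ≥ 2. If the permanent of A is nonzero and every column of A contains exactly two entries equal to 1, then the permanent of A is at least 2. -/
/-- The permanent of a square matrix over ℕ. -/
def pm {n : ℕ} (A : Matrix (Fin n) (Fin n) ℕ) : ℕ :=
  ∑ σ : Equiv.Perm (Fin n), ∏ i, A i (σ i)

/-- A binary n×n matrix (n ≥ 2) with nonzero permanent in which every column
contains exactly two entries equal to 1 has permanent at least 2. -/
theorem stmt0 (n : ℕ) (hn : 2 ≤ n) (A : Matrix (Fin n) (Fin n) ℕ)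
    (hbin : ∀ i j, A i j = 0 ∨ A i j = 1)
    (hperm : pm A ≠ 0)
    (hcol : ∀ j, (Finset.univ.filter (fun i => A i j = 1)).card = 2) :
    2 ≤ pm A := by
  classical
  set S : Finset (Equiv.Perm (Fin n)) :=
    Finset.univ.filter (fun σ : Equiv.Perm (Fin n) => ∀ i, A i (σ i) = 1) with hS
  have hpm : pm A = S.card := by
    rw [hS, Finset.card_filter]
    unfold pm
    refine Finset.sum_congr rfl fun σ _ => ?_
    split
    · next h => simp [h]
    · next h =>
      push_neg at h
      obtain ⟨i, hi⟩ := h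
      exact Finset.prod_eq_zero (Finset.mem_univ i) ((hbin i (σ i)).resolve_right hi)
  rw [hpm] at hperm ⊢
  obtain ⟨σ0, hσ0mem⟩ := Finset.card_ne_zero.mp hperm
  have hσ0 : ∀ i, A i (σ0 i) = 1 := (Finset.mem_filter.mp hσ0mem).2
  -- spare row in each column
  have hg : ∀ j, ∃ r, A r j = 1 ∧ r ≠ σ0.symm j := by
    intro j
    by_contra hcon
    push_neg at hcon
    have hsub : Finset.univ.filter (fun i => A i j = 1) ⊆ {σ0.symm j} := by
      intro r hr
      rw [Finset.mem_filter] at hr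
      simp [hcon r hr.2]
    have := Finset.card_le_card hsub
    rw [hcol j, Finset.card_singleton] at this
    omega
  choose g hg1 hg2 using hg
  set h : Fin n → Fin n := fun x => σ0 (g x) with hh
  -- find a periodic point of h
  have hne : Nonempty (Fin n) := ⟨⟨0, by omega⟩⟩
  obtain ⟨j0⟩ := hne
  obtain ⟨a, b, hab, heq⟩ : ∃ a b : ℕ, a < b ∧ h^[a] j0 = h^[b] j0 := by
    obtain ⟨a, b, hne, heq⟩ := Finite.exists_ne_map_eq_of_infinite (fun m : ℕ => h^[m] j0)
    rcases lt_or_gt_of_ne hne with hl | hl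
    · exact ⟨a, b, hl, heq⟩
    · exact ⟨b, a, hl, heq.symm⟩
  set j := h^[a] j0 with hj
  set k := b - a with hk
  have hk1 : 1 ≤ k := by omega
  have hcyc : h^[k] j = j := by
    rw [hj, ← Function.iterate_add_apply]
    have hkab : k + a = b := by omega
    rw [hkab, ← heq]
  set C : Finset (Fin n) := (Finset.range k).image (fun m => h^[m] j) with hC
  have hjC : j ∈ C := Finset.mem_image.mpr ⟨0, Finset.mem_range.mpr hk1, rfl⟩
  have hmaps : ∀ x ∈ C, h x ∈ C := by
    intro x hx
    obtain ⟨m, hm, rfl⟩ := Finset.mem_image.mp hx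
    rw [Finset.mem_range] at hm
    rcases Nat.lt_or_ge (m + 1) k with h1 | h1
    · exact Finset.mem_image.mpr ⟨m + 1, Finset.mem_range.mpr h1,
        by rw [Function.iterate_succ_apply']⟩
    · have hmk : m + 1 = k := by omega
      have h2 : h (h^[m] j) = j := by
        rw [← Function.iterate_succ_apply' h m j, Nat.succ_eq_add_one, hmk, hcyc]
      rw [h2]; exact hjC
  have hsurj : ∀ x ∈ C, ∃ y ∈ C, h y = x := by
    intro x hx
    obtain ⟨m, hm, rfl⟩ := Finset.mem_image.mp hx
    rw [Finset.mem_range] at hm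
    rcases Nat.eq_zero_or_pos m with rfl | hm0
    · refine ⟨h^[k - 1] j, Finset.mem_image.mpr ⟨k - 1, Finset.mem_range.mpr (by omega), rfl⟩, ?_⟩
      rw [← Function.iterate_succ_apply' h (k-1) j]
      have hk2 : k - 1 + 1 = k := by omega
      rw [Nat.succ_eq_add_one, hk2, hcyc]
      rfl
    · refine ⟨h^[m - 1] j, Finset.mem_image.mpr ⟨m - 1, Finset.mem_range.mpr (by omega), rfl⟩, ?_⟩
      rw [← Function.iterate_succ_apply' h (m-1) j]
      congr 1
      omega
  have hinjC : Set.InjOn h (C : Set (Fin n)) := by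
    have hfin : (C : Set (Fin n)).Finite := C.finite_toSet
    have hm : Set.MapsTo h (C : Set (Fin n)) (C : Set (Fin n)) := fun x hx => hmaps x hx
    have hs : Set.SurjOn h (C : Set (Fin n)) (C : Set (Fin n)) := by
      intro x hx
      obtain ⟨y, hy, hyx⟩ := hsurj x hx
      exact ⟨y, hy, hyx⟩
    exact ((hfin.surjOn_iff_bijOn_of_mapsTo hm).mp hs).injOn
  -- define the new permutation via its inverse p
  set p : Fin n → Fin n := fun x => if x ∈ C then g x else σ0.symm x with hp
  have hpinj : Function.Injective p := by
    intro x y hxy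
    by_cases hx : x ∈ C <;> by_cases hy : y ∈ C <;> simp only [hp, hx, hy, if_pos, if_neg,
      if_true, if_false] at hxy
    · exact hinjC hx hy (by show σ0 (g x) = σ0 (g y); rw [hxy])
    · exfalso
      apply hy
      have hyx : y = h x := by show y = σ0 (g x); rw [hxy]; simp
      rw [hyx]; exact hmaps x hx
    · exfalso
      apply hx
      have hxy' : x = h y := by show x = σ0 (g y); rw [← hxy]; simp
      rw [hxy']; exact hmaps y hy
    · exact σ0.symm.injective hxy
  have hbij : Function.Bijective p := Finite.injective_iff_bijective.mp hpinj
  set τ : Equiv.Perm (Fin n) := (Equiv.ofBijective p hbij).symm with hτ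
  have hpτ : ∀ i, p (τ i) = i := fun i => (Equiv.ofBijective p hbij).apply_symm_apply i
  have hAτ : ∀ i, A i (τ i) = 1 := by
    intro i
    have hi := hpτ i
    by_cases hc : τ i ∈ C
    · rw [hp] at hi; simp only [hc, if_true] at hi
      have h2 := hg1 (τ i)
      rw [hi] at h2; exact h2
    · rw [hp] at hi; simp only [hc, if_false] at hi
      have h2 : A (σ0.symm (τ i)) (τ i) = 1 := by
        have := hσ0 (σ0.symm (τ i)); simpa using this
      rw [hi] at h2; exact h2
  have hτmem : τ ∈ S := Finset.mem_filter.mpr ⟨Finset.mem_univ _, hAτ⟩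
  have hτne : τ ≠ σ0 := by
    intro hcon
    have h1 : p j = g j := by simp [hp, hjC]
    have h2 : τ.symm j = p j := rfl
    have h3 : τ.symm j = σ0.symm j := by rw [hcon]
    rw [h2, h1] at h3
    exact hg2 j h3
  exact Finset.one_lt_card.mpr ⟨τ, hτmem, σ0, hσ0mem, hτne⟩
end

section
/- Let A be an n×n matrix with entries in {0,1}, n ≥ 2. If the permanent of A is nonzero and every column of A contains at least two entries equal to 1, then the permanent of A is at least 2. -/
/-- A binary n×n matrix (n ≥ 2) with nonzero permanent in which every column
contains at least two entries equal to 1 has permanent at least 2. -/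
theorem stmt1 (n : ℕ) (hn : 2 ≤ n) (A : Matrix (Fin n) (Fin n) ℕ)
    (hbin : ∀ i j, A i j = 0 ∨ A i j = 1)
    (hperm : pm A ≠ 0)
    (hcol : ∀ j, 2 ≤ (Finset.univ.filter (fun i => A i j = 1)).card) :
    2 ≤ pm A := by
  classical
  unfold pm at *
  obtain ⟨σ, -, hσ⟩ := Finset.exists_ne_zero_of_sum_ne_zero hperm
  have h1 : ∀ i, A i (σ i) = 1 := by
    intro i
    rcases hbin i (σ i) with h | h
    · exact absurd (Finset.prod_eq_zero (Finset.mem_univ i) h) hσ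
    · exact h
  have hfex : ∀ i : Fin n, ∃ i', i' ≠ i ∧ A i' (σ i) = 1 := by
    intro i
    have h2 : 1 < (Finset.univ.filter (fun i' => A i' (σ i) = 1)).card := by
      have := hcol (σ i); omega
    obtain ⟨b, hb, hbne⟩ := Finset.exists_mem_ne h2 i
    exact ⟨b, hbne, (Finset.mem_filter.mp hb).2⟩
  choose f hfne hf1 using hfex
  have i0 : Fin n := ⟨0, by omega⟩
  obtain ⟨t1, t2, hne, heq⟩ :=
    Fintype.exists_ne_map_eq_of_card_lt (fun t : Fin (n+1) => f^[(t : ℕ)] i0)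
      (by simp)
  have key : ∃ (x : Fin n) (k : ℕ), 0 < k ∧ f^[k] x = x := by
    rcases Ne.lt_or_gt hne with h | h
    · have h' : (t1 : ℕ) < (t2 : ℕ) := h
      refine ⟨f^[(t1 : ℕ)] i0, (t2 : ℕ) - (t1 : ℕ), by omega, ?_⟩
      rw [← Function.iterate_add_apply]
      have hh : ((t2 : ℕ) - (t1 : ℕ)) + (t1 : ℕ) = (t2 : ℕ) := by omega
      rw [hh, heq]
    · have h' : (t2 : ℕ) < (t1 : ℕ) := h
      refine ⟨f^[(t2 : ℕ)] i0, (t1 : ℕ) - (t2 : ℕ), by omega, ?_⟩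
      rw [← Function.iterate_add_apply]
      have hh : ((t1 : ℕ) - (t2 : ℕ)) + (t2 : ℕ) = (t1 : ℕ) := by omega
      rw [hh, heq]
  obtain ⟨x, k, hk, hkx⟩ := key
  set P : Fin n → Prop := fun j => ∃ t, f^[t] x = j with hP
  have hPx : P x := ⟨0, rfl⟩
  have hPper : ∀ j, P j → f^[k] j = j := by
    rintro j ⟨t, rfl⟩
    rw [← Function.iterate_add_apply, Nat.add_comm,
      Function.iterate_add_apply, hkx]
  have hPf : ∀ j, P j → P (f j) := by
    rintro j ⟨t, rfl⟩
    exact ⟨t + 1, by rw [Function.iterate_succ_apply']⟩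
  have hPg : ∀ j, P j → P (f^[k-1] j) := by
    rintro j ⟨t, rfl⟩
    exact ⟨k - 1 + t, by rw [Function.iterate_add_apply]⟩
  have hkk : k - 1 + 1 = k := by omega
  have hfk : ∀ j, P j → f (f^[k-1] j) = j := by
    intro j hj
    calc f (f^[k-1] j) = f^[k-1+1] j := (Function.iterate_succ_apply' f (k-1) j).symm
      _ = f^[k] j := by rw [hkk]
      _ = j := hPper j hj
  set efun : Fin n → Fin n := fun j => if P j then f^[k-1] j else j with hefun
  set einv : Fin n → Fin n := fun j => if P j then f j else j with heinv
  have hleft : Function.LeftInverse einv efun := by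
    intro j
    by_cases hj : P j
    · simp only [hefun, heinv, if_pos hj, if_pos (hPg j hj)]
      exact hfk j hj
    · simp only [hefun, heinv, if_neg hj]
  have hright : Function.RightInverse einv efun := by
    intro j
    by_cases hj : P j
    · simp only [hefun, heinv, if_pos hj, if_pos (hPf j hj)]
      calc f^[k-1] (f j) = f^[k-1+1] j := (Function.iterate_succ_apply f (k-1) j).symm
        _ = f^[k] j := by rw [hkk]
        _ = j := hPper j hj
    · simp only [hefun, heinv, if_neg hj]
  set e : Equiv.Perm (Fin n) := ⟨efun, einv, hleft, hright⟩ with he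
  set τ : Equiv.Perm (Fin n) := e.trans σ with hτ
  have hτ1 : ∀ i, A i (τ i) = 1 := by
    intro i
    by_cases hi : P i
    · have : τ i = σ (f^[k-1] i) := by
        simp [hτ, he, hefun, Equiv.trans_apply, if_pos hi]
      rw [this]
      have := hf1 (f^[k-1] i)
      rwa [hfk i hi] at this
    · have : τ i = σ i := by
        simp [hτ, he, hefun, Equiv.trans_apply, if_neg hi]
      rw [this]; exact h1 i
  have hτne : τ ≠ σ := by
    intro hcon
    have hex : efun x ≠ x := by
      simp only [hefun, if_pos hPx]
      intro hcon2
      have := hfk x hPx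
      rw [hcon2] at this
      exact hfne x this
    have : τ x = σ x := by rw [hcon]
    simp only [hτ, Equiv.trans_apply] at this
    exact hex (σ.injective this)
  have hsub : ({τ, σ} : Finset (Equiv.Perm (Fin n))).sum
      (fun σ' => ∏ i, A i (σ' i)) ≤ ∑ σ' : Equiv.Perm (Fin n), ∏ i, A i (σ' i) :=
    Finset.sum_le_sum_of_subset (Finset.subset_univ _)
  rw [Finset.sum_pair hτne] at hsub
  have e1 : ∏ i, A i (τ i) = 1 := Finset.prod_eq_one (fun i _ => hτ1 i)
  have e2 : ∏ i, A i (σ i) = 1 := Finset.prod_eq_one (fun i _ => h1 i)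
  rw [e1, e2] at hsub
  exact hsub
end

section
/- In Clear Mastermind restricted to the case k = n with the secret promised to be a permutation of {1,…,n} and with feedback reduced to per-position correct/incorrect marks, the codebreaker cannot guarantee finding the secret in fewer than n rounds; i.e., G(n) ≥ n for all n ≥ 1. -/
attribute [local instance] Classical.propDecidable

namespace PG

variable {n : ℕ}

/-- Per-position exact-match feedback: `true` (✓) at `i` iff `x i = y i`. -/
def tau (x y : Fin n → Fin n) (i : Fin n) : Bool := decide (x i = y i)

/-- A codebreaker strategy in the permutation game. -/
def PStrategy (n : ℕ) : Type :=
  List (Fin n → Bool) → (Fin n → Fin n)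

/-- Feedback history after `r` rounds against secret `y`. -/
def phist (S : PStrategy n) (y : Fin n → Fin n) : ℕ → List (Fin n → Bool)
  | 0 => []
  | r + 1 => phist S y r ++ [tau (S (phist S y r)) y]

/-- The guess in round `r` (0-indexed). -/
def pguess (S : PStrategy n) (y : Fin n → Fin n) (r : ℕ) : Fin n → Fin n :=
  S (phist S y r)

/-- `S` wins within `m` rounds: for every secret permutation, some guess among
the first `m` equals the secret. -/
def PWinsIn (S : PStrategy n) (m : ℕ) : Prop :=
  ∀ y : Equiv.Perm (Fin n), ∃ r < m, pguess S (⇑y) r = ⇑y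

/-- `Gnum n`: the optimal worst-case number of rounds needed to guess a secret
permutation of `{1,…,n}` with per-position ✓/✗ feedback. -/
noncomputable def Gnum (n : ℕ) : ℕ :=
  sInf {m | ∃ S : PStrategy n, PWinsIn S m}

/-- A history of (guess, feedback) pairs. -/
abbrev Hist (n : ℕ) := List ((Fin n → Fin n) × (Fin n → Bool))

/-- A permutation is consistent with a history iff it satisfies every asserted
equality (✓) and inequality (✗). -/
def Consistent (H : Hist n) (σ : Equiv.Perm (Fin n)) : Prop :=
  ∀ p ∈ H, ∀ i : Fin n, if p.2 i then p.1 i = σ i else p.1 i ≠ σ i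

/-- A permutation satisfies a partial feedback list `g` (on the first
`g.length` positions) for guess `x`. -/
def PrefixOK (x : Fin n → Fin n) (g : List Bool) (σ : Equiv.Perm (Fin n)) : Prop :=
  ∀ (j : ℕ) (hg : j < g.length) (hn : j < n),
    if g.get ⟨j, hg⟩ then x ⟨j, hn⟩ = σ ⟨j, hn⟩ else x ⟨j, hn⟩ ≠ σ ⟨j, hn⟩

/-- Greedy adversary feedback on the first `j` positions: scanning left to
right, answer ✗ whenever some permutation consistent with the history and the
partial feedback so far remains, otherwise ✓. -/
noncomputable def greedyAux (H : Hist n) (x : Fin n → Fin n) : ℕ → List Bool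
  | 0 => []
  | j + 1 =>
    greedyAux H x j ++
      [if ∃ σ : Equiv.Perm (Fin n),
          Consistent H σ ∧ PrefixOK x (greedyAux H x j ++ [false]) σ
        then false else true]

/-- The full greedy feedback vector for guess `x` given history `H`. -/
noncomputable def gfb (H : Hist n) (x : Fin n → Fin n) (i : Fin n) : Bool :=
  (greedyAux H x n).getD i.val true

/-- The history after `r` rounds when the guesses are `xs 0, xs 1, …` and the
codemaker answers greedily. -/
noncomputable def greedyHist (xs : ℕ → Fin n → Fin n) : ℕ → Hist n
  | 0 => []
  | r + 1 => greedyHist xs r ++ [(xs r, gfb (greedyHist xs r) (xs r))]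

/-- The 0/1 tracking matrix of a history: entry `(i, j)` is `0` iff some guess
placed value `j` at position `i` and received answer ✗. -/
noncomputable def track (H : Hist n) : Matrix (Fin n) (Fin n) ℕ :=
  fun i j => if ∃ p ∈ H, p.1 i = j ∧ p.2 i = false then 0 else 1

end PG

namespace PGAux

variable {n : ℕ}


variable {n : ℕ}

def MZ (Z : Fin n → Finset (Fin n)) : Set (Equiv.Perm (Fin n)) :=
  {σ | ∀ i, σ i ∉ Z i}

def addZ (Z : Fin n → Finset (Fin n)) (i j : Fin n) : Fin n → Finset (Fin n) :=
  fun i' => if i' = i then insert j (Z i') else Z i'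

lemma MZ_mono {Z Z' : Fin n → Finset (Fin n)} (h : ∀ i, Z i ⊆ Z' i) :
    MZ Z' ⊆ MZ Z := fun σ hσ i hi => hσ i (h i hi)

lemma addZ_subset (Z : Fin n → Finset (Fin n)) (i j : Fin n) (i' : Fin n) :
    Z i' ⊆ addZ Z i j i' := by
  unfold addZ; split
  · exact Finset.subset_insert _ _
  · exact subset_rfl

lemma mem_addZ_self (Z : Fin n → Finset (Fin n)) (i j : Fin n) :
    j ∈ addZ Z i j i := by simp [addZ]

lemma mem_MZ_addZ {Z : Fin n → Finset (Fin n)} {σ : Equiv.Perm (Fin n)}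
    (hσ : σ ∈ MZ Z) {i : Fin n} {j : Fin n} (hne : σ i ≠ j) :
    σ ∈ MZ (addZ Z i j) := by
  intro i'
  unfold addZ
  split
  · rename_i heq
    subst heq
    rw [Finset.mem_insert]
    push_neg
    exact ⟨hne, hσ i'⟩
  · exact hσ i'

noncomputable def stepk (Z : Fin n → Finset (Fin n)) (x : Fin n → Fin n) :
    ℕ → Fin n → Finset (Fin n)
  | 0 => Z
  | k + 1 =>
    if h : k < n then
      if (MZ (addZ (stepk Z x k) ⟨k, h⟩ (x ⟨k, h⟩))).Nonempty then
        addZ (stepk Z x k) ⟨k, h⟩ (x ⟨k, h⟩)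
      else stepk Z x k
    else stepk Z x k

noncomputable def fbZ (Z : Fin n → Finset (Fin n)) (x : Fin n → Fin n) (i : Fin n) : Bool :=
  if (MZ (addZ (stepk Z x i.val) i (x i))).Nonempty then false else true

lemma stepk_succ_eq (Z : Fin n → Finset (Fin n)) (x : Fin n → Fin n) (i : Fin n) :
    stepk Z x (i.val + 1) =
      if (MZ (addZ (stepk Z x i.val) i (x i))).Nonempty then
        addZ (stepk Z x i.val) i (x i)
      else stepk Z x i.val := by
  rw [stepk, dif_pos i.isLt]

lemma stepk_le_subset (Z : Fin n → Finset (Fin n)) (x : Fin n → Fin n) {k l : ℕ}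
    (h : k ≤ l) (i' : Fin n) : stepk Z x k i' ⊆ stepk Z x l i' := by
  induction l, h using Nat.le_induction with
  | base => exact subset_rfl
  | succ l hl ih =>
    refine ih.trans ?_
    rw [stepk]
    split
    · split
      · exact addZ_subset _ _ _ _
      · exact subset_rfl
    · exact subset_rfl

-- fbZ lemmas
lemma fbZ_false_mem {Z : Fin n → Finset (Fin n)} {x : Fin n → Fin n} {i : Fin n}
    (h : fbZ Z x i = false) : x i ∈ stepk Z x n i := by
  unfold fbZ at h
  by_cases hc : (MZ (addZ (stepk Z x i.val) i (x i))).Nonempty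
  · have h1 : x i ∈ stepk Z x (i.val + 1) i := by
      rw [stepk_succ_eq, if_pos hc]
      exact mem_addZ_self _ _ _
    exact stepk_le_subset Z x i.isLt i h1
  · rw [if_neg hc] at h
    exact absurd h (by simp)

lemma fbZ_eq_tau {Z : Fin n → Finset (Fin n)} {x : Fin n → Fin n}
    {σ : Equiv.Perm (Fin n)} (hσ : σ ∈ MZ (stepk Z x n)) (i : Fin n) :
    fbZ Z x i = PG.tau x (⇑σ) i := by
  have hσi : σ ∈ MZ (stepk Z x i.val) :=
    MZ_mono (fun i' => stepk_le_subset Z x (le_of_lt i.isLt) i') hσ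
  unfold fbZ
  by_cases hc : (MZ (addZ (stepk Z x i.val) i (x i))).Nonempty
  · rw [if_pos hc]
    have hx : x i ∈ stepk Z x n i := fbZ_false_mem (by rw [fbZ, if_pos hc])
    have : x i ≠ σ i := fun he => hσ i (he ▸ hx)
    simp [PG.tau, this]
  · rw [if_neg hc]
    have : x i = σ i := by
      by_contra hne
      exact hc ⟨σ, mem_MZ_addZ hσi (fun he => hne he.symm)⟩
    simp [PG.tau, this]

lemma stepk_eq_of_all_true {Z : Fin n → Finset (Fin n)} {x : Fin n → Fin n}
    (h : ∀ i, fbZ Z x i = true) : ∀ k, k ≤ n → stepk Z x k = Z := by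
  intro k hk
  induction k with
  | zero => rfl
  | succ k ih =>
    have hkn : k < n := hk
    have hZ : stepk Z x k = Z := ih (le_of_lt hkn)
    have hC : ¬ (MZ (addZ (stepk Z x k) ⟨k, hkn⟩ (x ⟨k, hkn⟩))).Nonempty := by
      intro hC
      have := h ⟨k, hkn⟩
      rw [fbZ] at this
      rw [if_pos hC] at this
      exact absurd this (by simp)
    rw [stepk, dif_pos hkn, if_neg hC]
    exact hZ

lemma exists_false_of_two {Z : Fin n → Finset (Fin n)} (x : Fin n → Fin n)
    {σ₁ σ₂ : Equiv.Perm (Fin n)} (h₁ : σ₁ ∈ MZ Z) (h₂ : σ₂ ∈ MZ Z) (hne : σ₁ ≠ σ₂) :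
    ∃ i, fbZ Z x i = false := by
  by_contra h
  push_neg at h
  have hall : ∀ i, fbZ Z x i = true := by
    intro i
    cases hb : fbZ Z x i
    · exact absurd hb (h i)
    · rfl
  have hforce : ∀ (σ : Equiv.Perm (Fin n)), σ ∈ MZ Z → ∀ i, σ i = x i := by
    intro σ hσ i
    by_contra hne'
    have hσi : σ ∈ MZ (stepk Z x i.val) := by
      rw [stepk_eq_of_all_true hall i.val (le_of_lt i.isLt)]
      exact hσ
    have hmem : σ ∈ MZ (addZ (stepk Z x i.val) i (x i)) := mem_MZ_addZ hσi hne'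
    have := hall i
    rw [fbZ, if_pos ⟨σ, hmem⟩] at this
    exact absurd this (by simp)
  exact hne (Equiv.ext fun i => (hforce σ₁ h₁ i).trans (hforce σ₂ h₂ i).symm)

lemma two_of_MZ (hn2 : 2 ≤ n) {Z : Fin n → Finset (Fin n)}
    (hc : ∀ i, (Z i).card + 2 ≤ n) {σ : Equiv.Perm (Fin n)} (hσ : σ ∈ MZ Z) :
    ∃ σ' ∈ MZ Z, σ' ≠ σ := by
  have hj : ∀ i : Fin n, ∃ j : Fin n, j ≠ σ i ∧ j ∉ Z i := by
    intro i
    have h1 : ((Finset.univ.erase (σ i)) \ Z i).Nonempty := by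
      rw [← Finset.card_pos]
      have h2 := Finset.le_card_sdiff (Z i) (Finset.univ.erase (σ i))
      have h3 : (Finset.univ.erase (σ i)).card = n - 1 := by
        rw [Finset.card_erase_of_mem (Finset.mem_univ _), Finset.card_univ, Fintype.card_fin]
      have h4 := hc i
      omega
    obtain ⟨j, hjmem⟩ := h1
    rw [Finset.mem_sdiff, Finset.mem_erase] at hjmem
    exact ⟨j, hjmem.1.1, hjmem.2⟩
  choose j hjne hjZ using hj
  set f : Fin n → Fin n := fun i => σ.symm (j i) with hf
  have hσf : ∀ i, σ (f i) = j i := fun i => σ.apply_symm_apply (j i)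
  have hfne : ∀ i, f i ≠ i := by
    intro i h
    apply hjne i
    have h2 := congrArg σ h
    rw [hσf] at h2
    exact h2
  have i0 : Fin n := ⟨0, by omega⟩
  have hper : ∃ (i1 : Fin n) (t : ℕ), 0 < t ∧ f^[t] i1 = i1 := by
    obtain ⟨a, b, hab, heq⟩ := Finite.exists_ne_map_eq_of_infinite (fun k : ℕ => f^[k] i0)
    rcases Ne.lt_or_gt hab with hlt | hlt
    · refine ⟨f^[a] i0, b - a, by omega, ?_⟩
      rw [← Function.iterate_add_apply]
      have hba : b - a + a = b := by omega
      rw [hba]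
      exact heq.symm
    · refine ⟨f^[b] i0, a - b, by omega, ?_⟩
      rw [← Function.iterate_add_apply]
      have hba : a - b + b = a := by omega
      rw [hba]
      exact heq
  obtain ⟨i1, hex⟩ := hper
  have hspec := Nat.find_spec hex
  set p := Nat.find hex with hp
  obtain ⟨hp0, hpfix⟩ := hspec
  have hmin : ∀ t, t < p → ¬(0 < t ∧ f^[t] i1 = i1) := fun t ht => Nat.find_min hex ht
  have hiter0 : ∀ a, a < p → f^[a] i1 = i1 → a = 0 := by
    intro a ha hfix
    by_contra h0
    exact hmin a ha ⟨Nat.pos_of_ne_zero h0, hfix⟩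
  have hinj : ∀ a b, a < p → b < p → f^[a] i1 = f^[b] i1 → a = b := by
    intro a b ha hb hab
    rcases Nat.lt_trichotomy a b with h | h | h
    · exfalso
      have h1 : f^[p - b + a] i1 = i1 := by
        rw [Function.iterate_add_apply, hab, ← Function.iterate_add_apply]
        have hpb : p - b + b = p := by omega
        rw [hpb]
        exact hpfix
      have := hiter0 (p - b + a) (by omega) h1
      omega
    · exact h
    · exfalso
      have h1 : f^[p - a + b] i1 = i1 := by
        rw [Function.iterate_add_apply, ← hab, ← Function.iterate_add_apply]
        have hpa : p - a + a = p := by omega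
        rw [hpa]
        exact hpfix
      have := hiter0 (p - a + b) (by omega) h1
      omega
  set O : Fin n → Prop := fun i => ∃ k, k < p ∧ f^[k] i1 = i with hO
  have hO1 : O i1 := ⟨0, hp0, rfl⟩
  have hfO : ∀ i, O i → O (f i) := by
    rintro i ⟨k, hk, rfl⟩
    rcases Nat.lt_or_ge (k + 1) p with h | h
    · exact ⟨k + 1, h, Function.iterate_succ_apply' f k i1⟩
    · have hkp : k + 1 = p := by omega
      have hwrap : f (f^[k] i1) = i1 := by
        rw [← Function.iterate_succ_apply' f k i1, show k.succ = p from hkp]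
        exact hpfix
      exact ⟨0, hp0, by rw [Function.iterate_zero_apply]; exact hwrap.symm⟩
  have hmod : ∀ c, c < p → f^[(c + 1) % p] i1 = f^[c + 1] i1 := by
    intro c hcp
    rcases Nat.lt_or_ge (c + 1) p with h | h
    · rw [Nat.mod_eq_of_lt h]
    · have hcp1 : c + 1 = p := by omega
      rw [hcp1, Nat.mod_self, Function.iterate_zero_apply]
      exact hpfix.symm
  set g : Fin n → Fin n := fun i => if O i then f i else i with hg
  have hginj : Function.Injective g := by
    intro u v huv
    by_cases hu : O u <;> by_cases hv : O v
    · obtain ⟨a, ha, rfl⟩ := hu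
      obtain ⟨b, hb, rfl⟩ := hv
      have hu' : O (f^[a] i1) := ⟨a, ha, rfl⟩
      have hv' : O (f^[b] i1) := ⟨b, hb, rfl⟩
      simp only [hg, if_pos hu', if_pos hv'] at huv
      rw [← Function.iterate_succ_apply' f a i1, ← Function.iterate_succ_apply' f b i1] at huv
      have hmodeq := hinj ((a + 1) % p) ((b + 1) % p) (Nat.mod_lt _ hp0) (Nat.mod_lt _ hp0)
        (by rw [hmod a ha, hmod b hb]; exact huv)
      have hab2 : a = b := by
        rcases Nat.lt_or_ge (a + 1) p with h1 | h1 <;> rcases Nat.lt_or_ge (b + 1) p with h2 | h2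
        · rw [Nat.mod_eq_of_lt h1, Nat.mod_eq_of_lt h2] at hmodeq; omega
        · have hb2 : b + 1 = p := by omega
          rw [Nat.mod_eq_of_lt h1, hb2, Nat.mod_self] at hmodeq; omega
        · have ha2 : a + 1 = p := by omega
          rw [Nat.mod_eq_of_lt h2, ha2, Nat.mod_self] at hmodeq; omega
        · omega
      rw [hab2]
    · exfalso
      simp only [hg, if_pos hu, if_neg hv] at huv
      exact hv (huv ▸ hfO u hu)
    · exfalso
      simp only [hg, if_neg hu, if_pos hv] at huv
      exact hu (huv ▸ hfO v hv)
    · simpa only [hg, if_neg hu, if_neg hv] using huv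
  have hgbij : Function.Bijective g := Finite.injective_iff_bijective.mp hginj
  refine ⟨(Equiv.ofBijective g hgbij).trans σ, ?_, ?_⟩
  · intro i
    show σ (Equiv.ofBijective g hgbij i) ∉ Z i
    have hci : Equiv.ofBijective g hgbij i = g i := rfl
    rw [hci]
    by_cases hOi : O i
    · simp only [hg, if_pos hOi]
      rw [hσf]
      exact hjZ i
    · simp only [hg, if_neg hOi]
      exact hσ i
  · intro hEq
    have h1 : (Equiv.ofBijective g hgbij).trans σ i1 = σ i1 := by rw [hEq]
    have h2 : σ (g i1) = σ i1 := h1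
    have h3 : g i1 = i1 := σ.injective h2
    simp only [hg, if_pos hO1] at h3
    exact hfne i1 h3


noncomputable def adv (S : PG.PStrategy n) :
    ℕ → ((Fin n → Finset (Fin n)) × List (Fin n → Bool))
  | 0 => (fun _ => ∅, [])
  | r + 1 =>
    (stepk (adv S r).1 (S (adv S r).2) n,
     (adv S r).2 ++ [fbZ (adv S r).1 (S (adv S r).2)])

lemma stepk_nonempty (Z : Fin n → Finset (Fin n)) (x : Fin n → Fin n)
    (h : (MZ Z).Nonempty) (k : ℕ) : (MZ (stepk Z x k)).Nonempty := by
  induction k with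
  | zero => exact h
  | succ k ih =>
    rw [stepk]
    split
    · split
      · rename_i hne; exact hne
      · exact ih
    · exact ih

lemma stepk_subset_insert (Z : Fin n → Finset (Fin n)) (x : Fin n → Fin n) (k : ℕ)
    (i' : Fin n) : stepk Z x k i' ⊆ insert (x i') (Z i') := by
  induction k with
  | zero => exact Finset.subset_insert _ _
  | succ k ih =>
    rw [stepk]
    split
    · split
      · unfold addZ
        split
        · rename_i heq
          subst heq
          intro a ha
          rcases Finset.mem_insert.mp ha with h1 | h1
          · exact h1 ▸ Finset.mem_insert_self _ _
          · exact ih h1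
        · exact ih
      · exact ih
    · exact ih

lemma adv_nonempty (S : PG.PStrategy n) (r : ℕ) : (MZ (adv S r).1).Nonempty := by
  induction r with
  | zero =>
    refine ⟨1, fun i => ?_⟩
    show (1 : Equiv.Perm (Fin n)) i ∉ (∅ : Finset (Fin n))
    exact Finset.notMem_empty _
  | succ r ih =>
    simp only [adv]
    exact stepk_nonempty _ _ ih n

lemma adv_card (S : PG.PStrategy n) (r : ℕ) (i : Fin n) :
    ((adv S r).1 i).card ≤ r := by
  induction r with
  | zero => simp [adv]
  | succ r ih =>
    simp only [adv]
    have h1 := Finset.card_le_card (stepk_subset_insert (adv S r).1 (S (adv S r).2) n i)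
    have h2 := Finset.card_insert_le (S (adv S r).2 i) ((adv S r).1 i)
    omega

lemma adv_mono (S : PG.PStrategy n) {r r' : ℕ} (h : r ≤ r') (i : Fin n) :
    (adv S r).1 i ⊆ (adv S r').1 i := by
  induction r', h using Nat.le_induction with
  | base => exact subset_rfl
  | succ l hl ih =>
    refine ih.trans ?_
    simp only [adv]
    exact stepk_le_subset _ _ (Nat.zero_le n) i

lemma adv_hist (S : PG.PStrategy n) (r : ℕ) :
    ∀ σ : Equiv.Perm (Fin n), σ ∈ MZ (adv S r).1 → PG.phist S (⇑σ) r = (adv S r).2 := by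
  induction r with
  | zero => intro σ _; rfl
  | succ r ih =>
    intro σ hσ
    have hσr : σ ∈ MZ (adv S r).1 := MZ_mono (fun i => adv_mono S (Nat.le_succ r) i) hσ
    have hstep : σ ∈ MZ (stepk (adv S r).1 (S (adv S r).2) n) := by
      simpa only [adv] using hσ
    simp only [PG.phist]
    rw [ih σ hσr]
    simp only [adv]
    congr 2
    funext i
    exact (fbZ_eq_tau hstep i).symm

noncomputable def exhaust (n : ℕ) : PG.PStrategy n := fun h =>
  if hh : h.length < Fintype.card (Equiv.Perm (Fin n)) then
    ⇑((Fintype.equivFin (Equiv.Perm (Fin n))).symm ⟨h.length, hh⟩)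
  else fun i => i

lemma phist_length (S : PG.PStrategy n) (y : Fin n → Fin n) (r : ℕ) :
    (PG.phist S y r).length = r := by
  induction r with
  | zero => rfl
  | succ r ih => simp [PG.phist, ih]

lemma exhaust_wins (n : ℕ) :
    PG.PWinsIn (exhaust n) (Fintype.card (Equiv.Perm (Fin n))) := by
  intro y
  set e := Fintype.equivFin (Equiv.Perm (Fin n)) with he
  refine ⟨(e y).val, (e y).isLt, ?_⟩
  show exhaust n (PG.phist (exhaust n) (⇑y) (e y).val) = ⇑y
  have hl : (PG.phist (exhaust n) (⇑y) (e y).val).length = (e y).val :=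
    phist_length _ _ _
  simp only [exhaust]
  rw [dif_pos (by rw [hl]; exact (e y).isLt)]
  have hfe : (⟨(PG.phist (exhaust n) (⇑y) (e y).val).length,
      by rw [hl]; exact (e y).isLt⟩ : Fin (Fintype.card (Equiv.Perm (Fin n)))) = e y := by
    apply Fin.ext
    exact hl
  rw [hfe]
  rw [Equiv.symm_apply_apply]

end PGAux

/-- In the permutation guessing game with per-position ✓/✗ feedback, the
codebreaker cannot guarantee success in fewer than `n` rounds: `G(n) ≥ n`. -/
theorem stmt9 (n : ℕ) (hn : 1 ≤ n) : n ≤ PG.Gnum n := by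
  rw [PG.Gnum]
  refine le_csInf ⟨Fintype.card (Equiv.Perm (Fin n)), PGAux.exhaust n, PGAux.exhaust_wins n⟩ ?_
  rintro m ⟨S, hwin⟩
  by_contra hmn
  push_neg at hmn
  obtain ⟨y, hy⟩ := PGAux.adv_nonempty S m
  obtain ⟨r, hrm, hguess⟩ := hwin y
  have hyr : y ∈ PGAux.MZ (PGAux.adv S r).1 :=
    PGAux.MZ_mono (fun i => PGAux.adv_mono S (le_of_lt hrm) i) hy
  have hn2 : 2 ≤ n := by omega
  have hcard : ∀ i, (((PGAux.adv S r).1) i).card + 2 ≤ n := by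
    intro i
    have := PGAux.adv_card S r i
    omega
  obtain ⟨σ', hσ', hne⟩ := PGAux.two_of_MZ hn2 hcard hyr
  obtain ⟨i, hfb⟩ := PGAux.exists_false_of_two (S (PGAux.adv S r).2) hσ' hyr hne
  have hmem : S (PGAux.adv S r).2 i ∈ (PGAux.adv S (r + 1)).1 i := by
    have h1 := PGAux.fbZ_false_mem hfb
    simpa only [PGAux.adv] using h1
  have hmem2 : S (PGAux.adv S r).2 i ∈ (PGAux.adv S m).1 i :=
    PGAux.adv_mono S (by omega) i hmem
  have hyne : y i ≠ S (PGAux.adv S r).2 i := fun h => hy i (by rw [h]; exact hmem2)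
  have hxy : S (PGAux.adv S r).2 = ⇑y := by
    rw [← PGAux.adv_hist S r y hyr]
    exact hguess
  exact hyne (congrFun hxy i).symm
end

section
/- Combining the adversary lemma and the permanent bound: in the game of guessing a secret permutation of {1,…,n} (n ≥ 2) with per-position ✓/✗ feedback, after the greedy adversary answers n−2 rounds, the set of consistent permutations has cardinality at least 2. Hence no codebreaker strategy solves the game in n−1 rounds, and the optimal number of rounds G(n) equals exactly n for n ≥ 2 (upper bound from guessing constant strings). -/
attribute [local instance] Classical.propDecidable

namespace PG

variable {n : ℕ}

lemma greedyAux_length (H : Hist n) (x : Fin n → Fin n) (j : ℕ) :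
    (greedyAux H x j).length = j := by
  induction j with
  | zero => rfl
  | succ j ih => rw [greedyAux]; simp [ih]

lemma greedyAux_prefix (H : Hist n) (x : Fin n → Fin n) {j k : ℕ} (h : j ≤ k) :
    greedyAux H x j <+: greedyAux H x k := by
  induction k with
  | zero => simp_all
  | succ k ih =>
    rcases Nat.lt_or_ge j (k+1) with h' | h'
    · refine (ih (by omega)).trans ?_
      conv_rhs => rw [greedyAux]
      exact List.prefix_append _ _
    · have : j = k + 1 := by omega
      subst this; exact List.prefix_refl _

lemma prefixOK_append (x : Fin n → Fin n) (l : List Bool) (b : Bool) (σ : Equiv.Perm (Fin n)) :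
    PrefixOK x (l ++ [b]) σ ↔ (PrefixOK x l σ ∧
      ∀ hn : l.length < n,
        if b then x ⟨l.length, hn⟩ = σ ⟨l.length, hn⟩
        else x ⟨l.length, hn⟩ ≠ σ ⟨l.length, hn⟩) := by
  constructor
  · intro h
    constructor
    · intro j hg hn
      have hg' : j < (l ++ [b]).length := by simp; omega
      have := h j hg' hn
      simp only [List.get_eq_getElem, Fin.val_mk] at this
      have e : (l ++ [b])[j]'hg' = l.get ⟨j, hg⟩ := by
        rw [List.get_eq_getElem]; exact List.getElem_append_left hg
      simp only [e] at this; exact this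
    · intro hn
      have hg' : l.length < (l ++ [b]).length := by simp
      have := h l.length hg' hn
      simp only [List.get_eq_getElem, Fin.val_mk] at this
      have e : (l ++ [b])[l.length]'hg' = b := List.getElem_concat_length rfl _
      simp only [e] at this; exact this
  · rintro ⟨h1, h2⟩ j hg hn
    rcases Nat.lt_or_ge j l.length with hj | hj
    · have := h1 j hj hn
      rwa [List.get_eq_getElem, List.getElem_append_left hj]
    · have hj' : j = l.length := by simp at hg; omega
      subst hj'
      have := h2 hn
      have e : (l ++ [b])[l.length]'(by simp) = b := List.getElem_concat_length rfl _
      simp only [List.get_eq_getElem, Fin.val_mk, e]; exact this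

/-- Invariant: as long as some permutation is consistent with `H`, some
permutation is consistent with `H` and the greedy partial feedback. -/
lemma exists_prefixOK (H : Hist n) (x : Fin n → Fin n)
    (h : ∃ σ : Equiv.Perm (Fin n), Consistent H σ) (j : ℕ) :
    ∃ σ : Equiv.Perm (Fin n), Consistent H σ ∧ PrefixOK x (greedyAux H x j) σ := by
  induction j with
  | zero =>
    obtain ⟨σ, hσ⟩ := h
    exact ⟨σ, hσ, fun j hg hn => by simp [greedyAux] at hg⟩
  | succ j ih =>
    rw [greedyAux]
    by_cases hP : ∃ σ : Equiv.Perm (Fin n),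
        Consistent H σ ∧ PrefixOK x (greedyAux H x j ++ [false]) σ
    · rw [if_pos hP]; exact hP
    · rw [if_neg hP]
      obtain ⟨σ, hσ, hpre⟩ := ih
      refine ⟨σ, hσ, (prefixOK_append _ _ _ _).2 ⟨hpre, ?_⟩⟩
      intro hn
      simp only [if_pos rfl]
      by_contra hne
      exact hP ⟨σ, hσ, (prefixOK_append _ _ _ _).2 ⟨hpre, fun hn' => by
        simp only [Bool.false_eq_true, if_false]; exact hne⟩⟩

lemma gfb_eq_getElem (H : Hist n) (x : Fin n → Fin n) (i : Fin n) :
    gfb H x i = (greedyAux H x n)[i.val]'(by rw [greedyAux_length]; exact i.isLt) := by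
  rw [gfb, List.getD_eq_getElem]

lemma prefixOK_full_iff (H : Hist n) (x : Fin n → Fin n) (σ : Equiv.Perm (Fin n)) :
    PrefixOK x (greedyAux H x n) σ ↔
      ∀ i : Fin n, if gfb H x i then x i = σ i else x i ≠ σ i := by
  constructor
  · intro h i
    have hg : i.val < (greedyAux H x n).length := by rw [greedyAux_length]; exact i.isLt
    have := h i.val hg i.isLt
    rw [List.get_eq_getElem] at this
    rw [gfb_eq_getElem]
    simpa using this
  · intro h j hg hn
    have := h ⟨j, hn⟩
    rw [gfb_eq_getElem] at this
    rw [List.get_eq_getElem]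
    simpa using this

lemma consistent_append (H : Hist n) (p : (Fin n → Fin n) × (Fin n → Bool))
    (σ : Equiv.Perm (Fin n)) :
    Consistent (H ++ [p]) σ ↔ (Consistent H σ ∧
      ∀ i : Fin n, if p.2 i then p.1 i = σ i else p.1 i ≠ σ i) := by
  simp only [Consistent, List.mem_append, List.mem_singleton]
  constructor
  · intro h
    exact ⟨fun q hq => h q (Or.inl hq), h p (Or.inr rfl)⟩
  · rintro ⟨h1, h2⟩ q hq
    rcases hq with hq | hq
    · exact h1 q hq
    · subst hq; exact h2

lemma greedy_consistent_nonempty (xs : ℕ → Fin n → Fin n) (r : ℕ) :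
    ∃ σ : Equiv.Perm (Fin n), Consistent (greedyHist xs r) σ := by
  induction r with
  | zero => exact ⟨1, fun p hp => by simp [greedyHist] at hp⟩
  | succ r ih =>
    obtain ⟨σ, hσ, hpre⟩ := exists_prefixOK (greedyHist xs r) (xs r) ih n
    refine ⟨σ, ?_⟩
    rw [greedyHist, consistent_append]
    exact ⟨hσ, (prefixOK_full_iff _ _ _).1 hpre⟩


/-- `σ` avoids all zero entries of the tracking matrix. -/
def Avoid (H : Hist n) (σ : Equiv.Perm (Fin n)) : Prop :=
  ∀ i : Fin n, track H i (σ i) = 1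

lemma track_eq_zero_iff (H : Hist n) (i j : Fin n) :
    track H i j = 0 ↔ ∃ p ∈ H, p.1 i = j ∧ p.2 i = false := by
  rw [track]
  by_cases h : ∃ p ∈ H, p.1 i = j ∧ p.2 i = false
  · simp [h]
  · simp [h]

lemma track_cases (H : Hist n) (i j : Fin n) :
    track H i j = 0 ∨ track H i j = 1 := by
  rw [track]; split <;> simp

lemma consistent_avoid {H : Hist n} {σ : Equiv.Perm (Fin n)} (h : Consistent H σ) :
    Avoid H σ := by
  intro i
  rw [track, if_neg]
  rintro ⟨p, hp, he, hf⟩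
  have := h p hp i
  rw [hf] at this
  simp at this
  exact this he

lemma avoid_append {H : Hist n} {p : (Fin n → Fin n) × (Fin n → Bool)}
    {σ : Equiv.Perm (Fin n)} (h : Avoid (H ++ [p]) σ) :
    Avoid H σ ∧ ∀ i : Fin n, p.2 i = false → p.1 i ≠ σ i := by
  constructor
  · intro i
    have hi := h i
    rcases track_cases H i (σ i) with h0 | h1
    · exfalso
      rw [track_eq_zero_iff] at h0
      obtain ⟨q, hq, he⟩ := h0
      rw [(track_eq_zero_iff _ _ _).2 ⟨q, by simp [hq], he⟩] at hi
      omega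
    · exact h1
  · intro i hf he
    have hi := h i
    rw [(track_eq_zero_iff _ _ _).2 ⟨p, by simp, he, hf⟩] at hi
    omega

/-- Core positional induction: if `σ` is consistent with `H` and avoids the
✗-marked positions of the greedy answer to `x`, then `σ` satisfies the greedy
partial feedback at every stage. -/
lemma prefixOK_of_avoid (H : Hist n) (x : Fin n → Fin n) (σ : Equiv.Perm (Fin n))
    (hc : Consistent H σ)
    (hav : ∀ i : Fin n, gfb H x i = false → x i ≠ σ i) (j : ℕ) :
    PrefixOK x (greedyAux H x j) σ := by
  induction j with
  | zero => intro k hg hn; simp [greedyAux] at hg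
  | succ j ih =>
    rw [greedyAux]
    by_cases hP : ∃ σ' : Equiv.Perm (Fin n),
        Consistent H σ' ∧ PrefixOK x (greedyAux H x j ++ [false]) σ'
    · rw [if_pos hP]
      refine (prefixOK_append _ _ _ _).2 ⟨ih, ?_⟩
      intro hn
      simp only [Bool.false_eq_true, if_false]
      have hn' : j < n := by rw [greedyAux_length] at hn; exact hn
      have hfb : gfb H x ⟨j, hn'⟩ = false := by
        rw [gfb_eq_getElem]
        have hpre := greedyAux_prefix H x (show j + 1 ≤ n from hn')
        have hlen : j < (greedyAux H x (j+1)).length := by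
          rw [greedyAux_length]; omega
        have e := List.IsPrefix.getElem hpre hlen
        have e2 : greedyAux H x (j+1) = greedyAux H x j ++ [false] := by
          rw [greedyAux, if_pos hP]
        have e3 : (greedyAux H x (j+1))[j]'hlen = false := by
          simp only [e2]
          exact List.getElem_concat_length (greedyAux_length H x j).symm _
        rw [← e]
        exact e3
      have e4 : (⟨(greedyAux H x j).length, hn⟩ : Fin n) = ⟨j, hn'⟩ :=
        Fin.ext (greedyAux_length H x j)
      rw [e4]
      exact hav ⟨j, hn'⟩ hfb
    · rw [if_neg hP]
      refine (prefixOK_append _ _ _ _).2 ⟨ih, ?_⟩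
      intro hn
      simp only [if_pos rfl]
      by_contra hne
      exact hP ⟨σ, hc, (prefixOK_append _ _ _ _).2 ⟨ih, fun hn' => by
        simp only [Bool.false_eq_true, if_false]; exact hne⟩⟩

/-- Key lemma: for greedy histories, avoiding the tracking zeros implies full
consistency. -/
lemma avoid_consistent (xs : ℕ → Fin n → Fin n) (r : ℕ) (σ : Equiv.Perm (Fin n))
    (h : Avoid (greedyHist xs r) σ) : Consistent (greedyHist xs r) σ := by
  induction r with
  | zero => intro p hp; simp [greedyHist] at hp
  | succ r ih =>
    rw [greedyHist] at h ⊢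
    obtain ⟨h1, h2⟩ := avoid_append h
    have hc := ih h1
    have hpre := prefixOK_of_avoid (greedyHist xs r) (xs r) σ hc h2 n
    rw [consistent_append]
    exact ⟨hc, (prefixOK_full_iff _ _ _).1 hpre⟩

/-- Each row of the tracking matrix has at most `r` zeros after `r` rounds. -/
lemma track_row_card (xs : ℕ → Fin n → Fin n) (r : ℕ) (i : Fin n) :
    (Finset.univ.filter (fun j => track (greedyHist xs r) i j = 0)).card ≤ r := by
  induction r with
  | zero =>
    convert Nat.le_refl 0
    rw [Finset.card_eq_zero, Finset.filter_eq_empty_iff]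
    intro j _
    rw [track_eq_zero_iff]
    rintro ⟨p, hp, -⟩
    simp [greedyHist] at hp
  | succ r ih =>
    have hsub : (Finset.univ.filter (fun j => track (greedyHist xs (r+1)) i j = 0)) ⊆
        insert (xs r i) (Finset.univ.filter (fun j => track (greedyHist xs r) i j = 0)) := by
      intro j hj
      rw [Finset.mem_filter, track_eq_zero_iff] at hj
      obtain ⟨-, p, hp, he, hf⟩ := hj
      rw [greedyHist] at hp
      rcases List.mem_append.1 hp with hp | hp
      · exact Finset.mem_insert_of_mem (Finset.mem_filter.2
          ⟨Finset.mem_univ _, (track_eq_zero_iff _ _ _).2 ⟨p, hp, he, hf⟩⟩)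
      · simp only [List.mem_singleton] at hp
        subst hp
        rw [← he]
        exact Finset.mem_insert_self _ _
    calc _ ≤ _ := Finset.card_le_card hsub
      _ ≤ _ + 1 := Finset.card_insert_le _ _
      _ ≤ r + 1 := by omega


/-- The permanent-style lemma, constructively: two distinct consistent
permutations exist after `n - 2` greedy rounds. -/
lemma two_consistent (hn2 : 2 ≤ n) (xs : ℕ → Fin n → Fin n) :
    ∃ σ τ : Equiv.Perm (Fin n), σ ≠ τ ∧
      Consistent (greedyHist xs (n-2)) σ ∧ Consistent (greedyHist xs (n-2)) τ := by
  set H := greedyHist xs (n-2) with hH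
  obtain ⟨σ₀, hσ₀⟩ := greedy_consistent_nonempty xs (n-2)
  have hav₀ : Avoid H σ₀ := consistent_avoid hσ₀
  have hex : ∀ i : Fin n, ∃ j : Fin n, j ≠ σ₀ i ∧ track H i j = 1 := by
    intro i
    have hz := track_row_card xs (n-2) i
    rw [← hH] at hz
    have hcards := Finset.card_filter_add_card_filter_not
      (s := (Finset.univ : Finset (Fin n))) (p := fun j => track H i j = 0)
    rw [Finset.card_univ, Fintype.card_fin] at hcards
    have h1 : 1 < (Finset.univ.filter (fun j => ¬ track H i j = 0)).card := by omega
    obtain ⟨j, hj, hjne⟩ := Finset.exists_mem_ne h1 (σ₀ i)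
    rw [Finset.mem_filter] at hj
    refine ⟨j, hjne, ?_⟩
    rcases track_cases H i j with h | h
    · exact absurd h hj.2
    · exact h
  choose g hg1 hg2 using hex
  set h : Fin n → Fin n := fun i => σ₀.symm (g i) with hh
  have hne : ∀ i, h i ≠ i := by
    intro i he
    apply hg1 i
    have := congrArg σ₀ he
    simpa [hh] using this
  have hnpos : 0 < n := by omega
  obtain ⟨s, t, hst, heq⟩ := Finite.exists_ne_map_eq_of_infinite
    (fun u : ℕ => h^[u] (⟨0, hnpos⟩ : Fin n))
  wlog hlt : s < t generalizing s t
  · exact this t s hst.symm heq.symm (by omega)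
  set x : Fin n := h^[s] (⟨0, hnpos⟩ : Fin n) with hx
  have hper : 0 < t - s ∧ h^[t - s] x = x := by
    refine ⟨by omega, ?_⟩
    rw [hx, ← Function.iterate_add_apply]
    rw [show t - s + s = t by omega]
    exact heq.symm
  have hper' : ∃ k, 0 < k ∧ h^[k] x = x := ⟨t - s, hper⟩
  set m0 := Nat.find hper' with hm0
  have hspec : 0 < m0 ∧ h^[m0] x = x := Nat.find_spec hper'
  have hmin : ∀ k, k < m0 → ¬(0 < k ∧ h^[k] x = x) := fun k hk => Nat.find_min _ hk
  have h2m : 2 ≤ m0 := by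
    rcases Nat.lt_or_ge m0 2 with hlt2 | hge
    · interval_cases m0
      · omega
      · exact absurd hspec.2 (by simpa using hne x)
    · exact hge
  set l : List (Fin n) := (List.range m0).map (fun u => h^[u] x) with hl
  have hllen : l.length = m0 := by simp [hl]
  have hnodup : l.Nodup := by
    refine List.Nodup.map_on ?_ (List.nodup_range (n := m0))
    intro a ha b hb hab
    simp only [List.mem_range] at ha hb
    by_contra hne'
    have key : ∀ a b, a < b → b < m0 → h^[a] x = h^[b] x → False := by
      intro a b hab' hb' he
      have h1 : h^[m0 - b + b] x = x := by
        rw [show m0 - b + b = m0 by omega]; exact hspec.2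
      rw [Function.iterate_add_apply] at h1
      rw [← he, ← Function.iterate_add_apply] at h1
      exact hmin (m0 - b + a) (by omega) ⟨by omega, h1⟩
    rcases Nat.lt_or_ge a b with hab' | hab'
    · exact key a b hab' hb hab
    · exact key b a (by omega) ha hab.symm
  have hgetl : ∀ (u : ℕ) (hu : u < m0), l[u]'(by omega) = h^[u] x := by
    intro u hu
    simp [hl]
  set c := l.formPerm with hc
  have hkey : ∀ y ∈ l, c y = h y := by
    intro y hy
    rw [hl, List.mem_map] at hy
    obtain ⟨u, hu, hyu⟩ := hy
    rw [List.mem_range] at hu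
    have h1 : c (l[u]'(by omega)) = l[(u+1) % l.length]'(by
        exact Nat.mod_lt _ (by omega)) :=
      List.formPerm_apply_getElem l hnodup u (by omega)
    rw [hgetl u hu] at h1
    rw [← hyu, h1]
    rcases Nat.lt_or_ge (u+1) m0 with hu1 | hu1
    · simp only [hllen]
      have e := hgetl ((u+1) % m0) (Nat.mod_lt _ (by omega))
      rw [e, Nat.mod_eq_of_lt hu1, Function.iterate_succ_apply']
    · have hu2 : u + 1 = m0 := by omega
      simp only [hllen]
      have e := hgetl ((u+1) % m0) (Nat.mod_lt _ (by omega))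
      rw [e, hu2, Nat.mod_self]
      show x = h (h^[u] x)
      rw [show h (h^[u] x) = h^[u+1] x from (Function.iterate_succ_apply' h u x).symm, hu2]
      exact hspec.2.symm
  have hxmem : x ∈ l := by
    rw [hl, List.mem_map]
    refine ⟨0, ?_, rfl⟩
    rw [List.mem_range]; omega
  set σ₁ := σ₀ * c with hσ₁
  have happ : ∀ i : Fin n, σ₁ i = σ₀ (c i) := fun i => rfl
  have hav₁ : Avoid H σ₁ := by
    intro i
    by_cases hi : i ∈ l
    · rw [happ, hkey i hi, hh]
      simp only [Equiv.apply_symm_apply]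
      exact hg2 i
    · rw [happ, hc, List.formPerm_apply_of_notMem hi]
      exact hav₀ i
  refine ⟨σ₀, σ₁, ?_, hσ₀, avoid_consistent xs (n-2) σ₁ hav₁⟩
  intro hcon
  apply hg1 x
  have he2 : σ₀ x = σ₁ x := by rw [hcon]
  rw [happ, hkey x hxmem, hh] at he2
  simp only [Equiv.apply_symm_apply] at he2
  exact he2.symm


/-- The adversary history against a concrete strategy. -/
noncomputable def advHist (S : PStrategy n) : ℕ → Hist n
  | 0 => []
  | r + 1 =>
    advHist S r ++ [(S ((advHist S r).map Prod.snd),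
      gfb (advHist S r) (S ((advHist S r).map Prod.snd)))]

lemma advHist_eq (S : PStrategy n) (r : ℕ) :
    greedyHist (fun r => S ((advHist S r).map Prod.snd)) r = advHist S r := by
  induction r with
  | zero => rfl
  | succ r ih => rw [greedyHist, advHist, ih]

lemma greedyHist_mem (xs : ℕ → Fin n → Fin n) {r r' : ℕ} (h : r < r') :
    (xs r, gfb (greedyHist xs r) (xs r)) ∈ greedyHist xs r' := by
  induction r' with
  | zero => omega
  | succ r' ih =>
    rw [greedyHist, List.mem_append]
    rcases Nat.lt_or_ge r r' with h' | h'
    · exact Or.inl (ih h')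
    · have : r = r' := by omega
      subst this
      simp

lemma no_win (hn2 : 2 ≤ n) (S : PStrategy n) : ¬ PWinsIn S (n - 1) := by
  intro hw
  set xs : ℕ → Fin n → Fin n := fun r => S ((advHist S r).map Prod.snd) with hxs
  obtain ⟨σ, τ, hst, hσ, hτ⟩ := two_consistent hn2 xs
  have hph : ∀ ρ : Equiv.Perm (Fin n), Consistent (greedyHist xs (n-2)) ρ →
      ∀ r, r ≤ n - 2 → phist S ⇑ρ r = (greedyHist xs r).map Prod.snd := by
    intro ρ hρ r
    induction r with
    | zero => intro _; rfl
    | succ r ih =>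
      intro hr
      have ih' := ih (by omega)
      rw [phist, ih', greedyHist, List.map_append]
      congr 1
      have hSx : S ((greedyHist xs r).map Prod.snd) = xs r := by
        rw [advHist_eq]
      rw [hSx]
      simp only [List.map_cons, List.map_nil]
      congr 1
      funext i
      have hmem := greedyHist_mem xs (show r < n - 2 by omega)
      have hcons := hρ _ hmem i
      dsimp only at hcons
      rw [tau]
      cases hfb : gfb (greedyHist xs r) (xs r) i with
      | false =>
        simp only [hfb] at hcons
        simp only [Bool.false_eq_true, if_false] at hcons
        simpa using hcons
      | true =>
        simp only [hfb] at hcons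
        simpa using hcons
  have hguess : ∀ ρ : Equiv.Perm (Fin n), Consistent (greedyHist xs (n-2)) ρ →
      ∀ r, r ≤ n - 2 → pguess S ⇑ρ r = xs r := by
    intro ρ hρ r hr
    rw [pguess, hph ρ hρ r hr]
    rw [advHist_eq]
  obtain ⟨r, hr, hgr⟩ := hw σ
  obtain ⟨r', hr', hgr'⟩ := hw τ
  have hr2 : r ≤ n - 2 := by omega
  have hr2' : r' ≤ n - 2 := by omega
  have hxsσ : xs r = ⇑σ := by rw [← hguess σ hσ r hr2]; exact hgr
  have hxsτ : xs r' = ⇑τ := by rw [← hguess τ hτ r' hr2']; exact hgr'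
  have key : ∀ (ρ ρ' : Equiv.Perm (Fin n)), Consistent (greedyHist xs (n-2)) ρ →
      Consistent (greedyHist xs (n-2)) ρ' → ∀ k, k < n - 2 → xs k = ⇑ρ → ρ = ρ' := by
    intro ρ ρ' hρ hρ' k hk hxk
    have hmem := greedyHist_mem xs hk
    have hall : ∀ i, gfb (greedyHist xs k) (xs k) i = true := by
      intro i
      by_contra hfb
      have hcons := hρ _ hmem i
      dsimp only at hcons
      rw [Bool.not_eq_true] at hfb
      simp only [hfb] at hcons
      simp only [Bool.false_eq_true, if_false] at hcons
      exact hcons (by rw [hxk])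
    apply Equiv.coe_fn_injective
    funext i
    have h1 := hρ _ hmem i
    have h2 := hρ' _ hmem i
    dsimp only at h1 h2
    simp only [hall i] at h1 h2
    rw [if_pos (by trivial)] at h1
    rw [if_pos (by trivial)] at h2
    show ρ i = ρ' i
    rw [← h1, ← h2]
  rcases Nat.lt_or_ge r (n-2) with hlt | hge
  · exact hst (key σ τ hσ hτ r hlt hxsσ)
  · rcases Nat.lt_or_ge r' (n-2) with hlt' | hge' 
    · exact hst (key τ σ hτ hσ r' hlt' hxsτ).symm
    · have e1 : r = n - 2 := by omega
      have e2 : r' = n - 2 := by omega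
      apply hst
      apply Equiv.coe_fn_injective
      show ⇑σ = ⇑τ
      rw [← hxsσ, ← hxsτ, e1, e2]

lemma phist_length (S : PStrategy n) (y : Fin n → Fin n) (r : ℕ) :
    (phist S y r).length = r := by
  induction r with
  | zero => rfl
  | succ r ih => rw [phist]; simp [ih]

lemma phist_getElem (S : PStrategy n) (y : Fin n → Fin n) (r j : ℕ) (hj : j < r) :
    (phist S y r)[j]'(by rw [phist_length]; omega) = tau (pguess S y j) y := by
  induction r with
  | zero => omega
  | succ r ih =>
    have hstep : phist S y (r+1) = phist S y r ++ [tau (S (phist S y r)) y] := rfl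
    simp only [hstep]
    rcases Nat.lt_or_ge j r with h' | h'
    · have e : (phist S y r ++ [tau (S (phist S y r)) y])[j]'(by
            simp [phist_length]; omega)
          = (phist S y r)[j]'(by rw [phist_length]; omega) :=
        List.getElem_append_left (by rw [phist_length]; omega)
      rw [e]
      exact ih h'
    · have hjr : j = r := by omega
      subst hjr
      have e : (phist S y j ++ [tau (S (phist S y j)) y])[j]'(by
            simp [phist_length])
          = tau (S (phist S y j)) y :=
        List.getElem_concat_length (phist_length S y j).symm _
      rw [e]
      rfl

/-- The constant-then-reconstruct strategy. -/
noncomputable def upS (n : ℕ) (hn : 0 < n) : PStrategy n := fun hist =>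
  if hl : hist.length + 1 < n then fun _ => ⟨hist.length, by omega⟩
  else fun i =>
    if h : ∃ j : Fin n, j.val + 1 < n ∧ (hist.getD j.val (fun _ => false)) i = true
    then h.choose else ⟨n - 1, by omega⟩

lemma upS_guess (hn : 0 < n) (y : Fin n → Fin n) (r : ℕ) (hr : r + 1 < n) :
    pguess (upS n hn) y r = fun _ => ⟨r, by omega⟩ := by
  rw [pguess, upS]
  rw [dif_pos (by rw [phist_length]; exact hr)]
  funext i
  congr 1
  exact phist_length _ _ _

lemma upS_win (hn : 0 < n) (y : Fin n → Fin n) :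
    pguess (upS n hn) y (n - 1) = y := by
  have hlen : (phist (upS n hn) y (n-1)).length = n - 1 := phist_length _ _ _
  rw [pguess, upS]
  rw [dif_neg (by rw [hlen]; omega)]
  funext i
  have hgetD : ∀ (j : ℕ) (hj : j + 1 < n),
      (phist (upS n hn) y (n-1)).getD j (fun _ => false) i
        = decide ((⟨j, by omega⟩ : Fin n) = y i) := by
    intro j hj
    rw [List.getD_eq_getElem _ _ (by rw [hlen]; omega)]
    rw [phist_getElem _ _ _ _ (by omega)]
    rw [upS_guess hn y j hj]
    rfl
  by_cases hvy : (y i).val + 1 < n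
  · rw [dif_pos ?side]
    case side =>
      refine ⟨y i, hvy, ?_⟩
      rw [hgetD (y i).val hvy]
      simp
    · generalize_proofs hpf
      obtain ⟨h1, h2⟩ := hpf.choose_spec
      rw [hgetD _ h1] at h2
      simp only [decide_eq_true_eq] at h2
      have : (hpf.choose).val = (y i).val := by rw [← h2]
      exact Fin.ext this
  · rw [dif_neg ?side2]
    case side2 =>
      rintro ⟨j, hj1, hj2⟩
      rw [hgetD j.val hj1] at hj2
      simp only [decide_eq_true_eq] at hj2
      have : j.val = (y i).val := by rw [← hj2]
      omega
    · have : (y i).val = n - 1 := by have := (y i).isLt; omega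
      exact Fin.ext (by simpa using this.symm)

lemma upS_winsIn (hn : 0 < n) : PWinsIn (upS n hn) n := by
  intro y
  exact ⟨n - 1, by omega, upS_win hn ⇑y⟩

end PG

/-- For `n ≥ 2`, after the greedy adversary answers `n - 2` rounds at least two
consistent permutations remain; hence no strategy solves the permutation game
in `n - 1` rounds and the optimal number of rounds is exactly `n`. -/
theorem stmt12 (n : ℕ) (hn : 2 ≤ n) :
    (∀ xs : ℕ → Fin n → Fin n,
      2 ≤ (Finset.univ.filter
        (fun σ : Equiv.Perm (Fin n) =>
          PG.Consistent (PG.greedyHist xs (n - 2)) σ)).card) ∧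
    PG.Gnum n = n := by
  constructor
  · intro xs
    obtain ⟨σ, τ, hst, hσ, hτ⟩ := PG.two_consistent hn xs
    refine Finset.one_lt_card.2 ⟨σ, ?_, τ, ?_, hst⟩
    · exact Finset.mem_filter.2 ⟨Finset.mem_univ _, hσ⟩
    · exact Finset.mem_filter.2 ⟨Finset.mem_univ _, hτ⟩
  · have hnpos : 0 < n := by omega
    have hwin : PG.PWinsIn (PG.upS n hnpos) n := PG.upS_winsIn hnpos
    apply le_antisymm
    · exact Nat.sInf_le (show n ∈ {m | ∃ S : PG.PStrategy n, PG.PWinsIn S m} from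
        ⟨PG.upS n hnpos, hwin⟩)
    · apply le_csInf ⟨n, show n ∈ {m | ∃ S : PG.PStrategy n, PG.PWinsIn S m} from
        ⟨PG.upS n hnpos, hwin⟩⟩
      intro m hm
      obtain ⟨S, hS⟩ := hm
      by_contra hlt
      push_neg at hlt
      have hS' : PG.PWinsIn S (n-1) := by
        intro y
        obtain ⟨r, hr, he⟩ := hS y
        exact ⟨r, by omega, he⟩
      exact PG.no_win hn S hS'
end

section
/- Auxiliary lemma: in the game of guessing a secret permutation of {1,…,n} with per-position ✓/✗ feedback, if the codebreaker additionally knows one forbidden pair (i,j) — i.e., that the value at position i is not j — then she can guarantee to find the secret within n − 1 rounds. -/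
attribute [local instance] Classical.propDecidable

namespace PG

variable {n : ℕ}

section Aux
variable [NeZero n]
open Fin.NatCast

lemma fin_cast_eq_iff {a : ℕ} (ha : a < n) {v : Fin n} :
    ((a : Fin n) = v) ↔ a = v.val := by
  rw [Fin.ext_iff, Fin.val_cast_of_lt ha]

/-- Index of the first round whose feedback at position `p` is ✓ (or `L.length`). -/
noncomputable def firstT (L : List (Fin n → Bool)) (p : Fin n) : ℕ :=
  if h : ∃ t, ∃ ht : t < L.length, L.get ⟨t, ht⟩ p = true then Nat.find h else L.length

lemma firstT_map_range_true (f : ℕ → Fin n → Bool) (r : ℕ) (p : Fin n)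
    (h : firstT ((List.range r).map f) p < r) :
    f (firstT ((List.range r).map f) p) p = true := by
  set L := (List.range r).map f with hL
  by_cases hex : ∃ t, ∃ ht : t < L.length, L.get ⟨t, ht⟩ p = true
  · have hval : firstT L p = Nat.find hex := by unfold firstT; rw [dif_pos hex]
    obtain ⟨ht, hg⟩ := Nat.find_spec hex
    rw [hval]
    have hgg : L.get ⟨Nat.find hex, ht⟩ = f (Nat.find hex) := by
      simp [hL, List.get_eq_getElem]
    rw [hgg] at hg; exact hg
  · have hval : firstT L p = L.length := by unfold firstT; rw [dif_neg hex]
    rw [hval] at h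
    simp [hL] at h

lemma firstT_map_range_false (f : ℕ → Fin n → Bool) (r : ℕ) (p : Fin n)
    (t : ℕ) (htr : t < r) (ht : t < firstT ((List.range r).map f) p) :
    f t p = false := by
  set L := (List.range r).map f with hL
  have hlen : t < L.length := by simp [hL]; omega
  have hget : L.get ⟨t, hlen⟩ = f t := by simp [hL, List.get_eq_getElem]
  by_cases hex : ∃ t, ∃ ht : t < L.length, L.get ⟨t, ht⟩ p = true
  · have hval : firstT L p = Nat.find hex := by unfold firstT; rw [dif_pos hex]
    rw [hval] at ht
    have hmin := Nat.find_min hex ht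
    push_neg at hmin
    have := hmin hlen
    rw [hget] at this
    simpa using this
  · push_neg at hex
    have := hex t hlen
    rw [hget] at this
    simpa using this

lemma firstT_map_range_eq (f : ℕ → Fin n → Bool) (r : ℕ) (p : Fin n)
    (s : ℕ) (hs : s < r) (h1 : f s p = true) (h2 : ∀ t < s, f t p = false) :
    firstT ((List.range r).map f) p = s := by
  set L := (List.range r).map f with hL
  have hslen : s < L.length := by simp [hL]; omega
  have hgets : L.get ⟨s, hslen⟩ = f s := by simp [hL, List.get_eq_getElem]
  have hex : ∃ t, ∃ ht : t < L.length, L.get ⟨t, ht⟩ p = true :=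
    ⟨s, hslen, by rw [hgets]; exact h1⟩
  have hval : firstT L p = Nat.find hex := by unfold firstT; rw [dif_pos hex]
  rw [hval, Nat.find_eq_iff]
  refine ⟨⟨hslen, by rw [hgets, h1]⟩, ?_⟩
  intro m hm
  rintro ⟨hmlen, hg⟩
  have hgm : L.get ⟨m, hmlen⟩ = f m := by simp [hL, List.get_eq_getElem]
  rw [hgm, h2 m hm] at hg
  exact Bool.false_ne_true hg

lemma firstT_map_range_eq_len (f : ℕ → Fin n → Bool) (r : ℕ) (p : Fin n)
    (h2 : ∀ t < r, f t p = false) :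
    firstT ((List.range r).map f) p = r := by
  set L := (List.range r).map f with hL
  have hex : ¬ ∃ t, ∃ ht : t < L.length, L.get ⟨t, ht⟩ p = true := by
    rintro ⟨t, htl, hg⟩
    have htr : t < r := by simp [hL] at htl; omega
    have hgt : L.get ⟨t, htl⟩ = f t := by simp [hL, List.get_eq_getElem]
    rw [hgt, h2 t htr] at hg
    exact Bool.false_ne_true hg
  have hval : firstT L p = L.length := by unfold firstT; rw [dif_neg hex]
  rw [hval]; simp [hL]

/-- The probe guess in round `t` (for hint `y 0 ≠ 0`, hit index `s`). -/
def G (s t : ℕ) : Fin n → Fin n :=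
  fun p => if p = 0 ∨ s < t then ((t + 1 : ℕ) : Fin n) else ((t : ℕ) : Fin n)

/-- The expected history against secret `y`. -/
def Hh (s : ℕ) (y : Fin n → Fin n) (r : ℕ) : List (Fin n → Bool) :=
  (List.range r).map (fun t => tau (G s t) y)

/-- The strategy exploiting the hint `y 0 ≠ 0`. -/
noncomputable def S0 (n : ℕ) [NeZero n] : PStrategy n := fun L =>
  if L.length + 2 < n then
    if firstT L 0 < L.length then fun _ => ((L.length + 1 : ℕ) : Fin n)
    else fun p => if p = 0 then ((L.length + 1 : ℕ) : Fin n) else ((L.length : ℕ) : Fin n)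
  else fun p =>
    if p = 0 then
      (if firstT L 0 < L.length then ((firstT L 0 + 1 : ℕ) : Fin n) else ((n - 1 : ℕ) : Fin n))
    else if firstT L p < L.length then
      (if firstT L 0 < firstT L p then ((firstT L p + 1 : ℕ) : Fin n)
        else ((firstT L p : ℕ) : Fin n))
    else (if firstT L 0 < L.length then ((n - 1 : ℕ) : Fin n) else ((n - 2 : ℕ) : Fin n))

variable {y : Equiv.Perm (Fin n)} {s : ℕ}

lemma tau_zero (hys : ((y 0 : Fin n) : ℕ) = s + 1) (t : ℕ) (ht : t + 1 < n) :
    tau (G s t) ⇑y 0 = decide (t = s) := by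
  have hG : G (n := n) s t 0 = ((t + 1 : ℕ) : Fin n) := by simp [G]
  simp only [tau, hG]
  rw [decide_eq_decide, fin_cast_eq_iff ht, hys]
  omega

lemma firstT_Hh_zero (hys : ((y 0 : Fin n) : ℕ) = s + 1) (r : ℕ) (hr : r + 2 ≤ n) :
    firstT (Hh s ⇑y r) 0 = if s < r then s else r := by
  unfold Hh
  by_cases hsr : s < r
  · rw [if_pos hsr]
    apply firstT_map_range_eq _ _ _ _ hsr
    · rw [tau_zero hys s (by omega)]; simp
    · intro t htl
      rw [tau_zero hys t (by omega)]
      simp; omega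
  · rw [if_neg hsr]
    apply firstT_map_range_eq_len
    intro t htl
    rw [tau_zero hys t (by omega)]
    simp; omega

lemma S0_eq_G (hys : ((y 0 : Fin n) : ℕ) = s + 1) (r : ℕ) (hr : r + 2 < n) :
    S0 n (Hh s ⇑y r) = G s r := by
  have hlen : (Hh s ⇑y r).length = r := by simp [Hh]
  have hk : firstT (Hh s ⇑y r) 0 = if s < r then s else r :=
    firstT_Hh_zero hys r (by omega)
  unfold S0
  rw [hlen, if_pos hr, hk]
  by_cases hsr : s < r
  · rw [if_pos hsr, if_pos hsr]
    funext p
    simp [G, hsr]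
  · rw [if_neg hsr, if_neg (by omega : ¬ r < r)]
    funext p
    by_cases hp : p = 0 <;> simp [G, hp, hsr]

lemma phist_eq (hys : ((y 0 : Fin n) : ℕ) = s + 1) (r : ℕ) (hr : r + 2 ≤ n) :
    phist (S0 n) ⇑y r = Hh s ⇑y r := by
  induction r with
  | zero => simp [phist, Hh]
  | succ r ih =>
    have ih' := ih (by omega)
    show phist (S0 n) ⇑y r ++ [tau (S0 n (phist (S0 n) ⇑y r)) ⇑y] = _
    rw [ih', S0_eq_G hys r (by omega)]
    unfold Hh
    rw [List.range_succ, List.map_append]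
    rfl

lemma final_guess (hn : 2 ≤ n) (hys : ((y 0 : Fin n) : ℕ) = s + 1) :
    pguess (S0 n) ⇑y (n - 2) = ⇑y := by
  have hsn : s + 1 < n := by rw [← hys]; exact (y 0).isLt
  have hhist : phist (S0 n) ⇑y (n - 2) = Hh s ⇑y (n - 2) :=
    phist_eq hys (n - 2) (by omega)
  have hlen : (Hh s ⇑y (n - 2)).length = n - 2 := by simp [Hh]
  have hk : firstT (Hh s ⇑y (n - 2)) 0 = if s < n - 2 then s else n - 2 :=
    firstT_Hh_zero hys (n - 2) (by omega)
  show S0 n (phist (S0 n) ⇑y (n - 2)) = ⇑y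
  rw [hhist]
  unfold S0
  rw [hlen, if_neg (by omega : ¬ n - 2 + 2 < n), hk]
  funext p
  by_cases hp : p = 0
  · subst hp
    rw [if_pos rfl]
    by_cases hs2 : s < n - 2
    · rw [if_pos hs2, if_pos hs2, fin_cast_eq_iff (by omega), hys]
    · rw [if_neg hs2, if_neg (by omega : ¬ n - 2 < n - 2),
        fin_cast_eq_iff (by omega), hys]
      omega
  · rw [if_neg hp]
    have hv : (y p : ℕ) < n := (y p).isLt
    have hyp0 : (y p : ℕ) ≠ s + 1 := by
      intro hc
      apply hp
      have he : y p = y 0 := by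
        apply Fin.ext
        rw [hc, hys]
      exact y.injective he
    have hGval : ∀ t : ℕ, t + 1 < n →
        (tau (G s t) ⇑y p = true ↔ (if s < t then t + 1 else t) = (y p : ℕ)) := by
      intro t ht
      have hg : G (n := n) s t p
          = if s < t then ((t + 1 : ℕ) : Fin n) else ((t : ℕ) : Fin n) := by
        simp [G, hp]
      simp only [tau, hg]
      by_cases hst : s < t
      · rw [if_pos hst, if_pos hst, decide_eq_true_iff, fin_cast_eq_iff ht]
      · rw [if_neg hst, if_neg hst, decide_eq_true_iff, fin_cast_eq_iff (by omega)]
    by_cases ht0 : firstT (Hh s ⇑y (n - 2)) p < n - 2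
    · rw [if_pos ht0]
      have htrue : tau (G s (firstT (Hh s ⇑y (n - 2)) p)) ⇑y p = true :=
        firstT_map_range_true (fun t => tau (G s t) ⇑y) (n - 2) p ht0
      rw [hGval _ (by omega)] at htrue
      by_cases hs2 : s < n - 2
      · simp only [if_pos hs2]
        by_cases hst : s < firstT (Hh s ⇑y (n - 2)) p
        · rw [if_pos hst]
          rw [if_pos hst] at htrue
          rw [fin_cast_eq_iff (by omega)]
          exact htrue
        · rw [if_neg hst]
          rw [if_neg hst] at htrue
          rw [fin_cast_eq_iff (by omega)]
          exact htrue
      · simp only [if_neg hs2]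
        rw [if_neg (by omega : ¬ n - 2 < firstT (Hh s ⇑y (n - 2)) p)]
        rw [if_neg (by omega : ¬ s < firstT (Hh s ⇑y (n - 2)) p)] at htrue
        rw [fin_cast_eq_iff (by omega)]
        exact htrue
    · rw [if_neg ht0]
      have hnoval : ∀ t, t < n - 2 → (if s < t then t + 1 else t) ≠ (y p : ℕ) := by
        intro t htl hc
        have hf : tau (G s t) ⇑y p = false :=
          firstT_map_range_false (fun t => tau (G s t) ⇑y) (n - 2) p t htl
            (by unfold Hh at ht0; omega)
        rw [← hGval t (by omega)] at hc
        rw [hc] at hf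
        simp at hf
      by_cases hs2 : s < n - 2
      · simp only [if_pos hs2]
        have hveq : (y p : ℕ) = n - 1 := by
          by_contra hne
          rcases Nat.lt_or_ge (y p : ℕ) (s + 1) with h | h
          · have hx := hnoval (y p : ℕ) (by omega)
            rw [if_neg (by omega)] at hx
            exact hx rfl
          · have hx := hnoval ((y p : ℕ) - 1) (by omega)
            rw [if_pos (by omega)] at hx
            omega
        rw [fin_cast_eq_iff (by omega)]
        omega
      · simp only [if_neg hs2]
        rw [if_neg (by omega : ¬ n - 2 < n - 2)]
        have hveq : (y p : ℕ) = n - 2 := by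
          by_contra hne
          have hx := hnoval (y p : ℕ) (by omega)
          rw [if_neg (by omega)] at hx
          exact hx rfl
        rw [fin_cast_eq_iff (by omega)]
        omega

lemma win0 (hy : y 0 ≠ 0) : ∃ r < n - 1, pguess (S0 n) ⇑y r = ⇑y := by
  have hn1 : 1 ≤ n := Nat.one_le_iff_ne_zero.mpr (NeZero.ne n)
  have hyv : (y 0 : Fin n).val ≠ 0 := by
    intro hc
    exact hy (Fin.ext (by simp [hc]))
  by_cases hn : 2 ≤ n
  · refine ⟨n - 2, by omega, ?_⟩
    exact final_guess hn (s := (y 0 : Fin n).val - 1) (by omega)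
  · exfalso
    have : (y 0 : Fin n).val < 1 := by have := (y 0).isLt; omega
    omega

end Aux

end PG

/-- If the codebreaker knows in advance one forbidden pair `(i, j)` (the secret
permutation does not take value `j` at position `i`), then she can find the
secret within `n − 1` rounds. -/
theorem stmt16 (n : ℕ) (i j : Fin n) :
    ∃ S : PG.PStrategy n, ∀ y : Equiv.Perm (Fin n), y i ≠ j →
      ∃ r < n - 1, PG.pguess S (⇑y) r = ⇑y := by
  rcases Nat.eq_zero_or_pos n with h0 | h0
  · subst h0; exact i.elim0
  haveI : NeZero n := ⟨by omega⟩
  set α : Equiv.Perm (Fin n) := Equiv.swap 0 i with hα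
  set β : Equiv.Perm (Fin n) := Equiv.swap 0 j with hβ
  refine ⟨fun L => fun p => β (PG.S0 n (L.map (fun g => g ∘ ⇑α)) (α.symm p)), ?_⟩
  intro y hy
  set S : PG.PStrategy n :=
    fun L => fun p => β (PG.S0 n (L.map (fun g => g ∘ ⇑α)) (α.symm p)) with hS
  set z : Equiv.Perm (Fin n) := (α.trans y).trans β.symm with hz
  have hz0 : z 0 ≠ 0 := by
    intro hc
    apply hy
    have : β.symm (y (α 0)) = 0 := hc
    rw [Equiv.symm_apply_eq] at this
    simpa [hα, hβ, Equiv.swap_apply_left] using this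
  have hmaps : ∀ (M : List (Fin n → Bool)),
      (M.map (fun g => g ∘ ⇑α.symm)).map (fun g => g ∘ ⇑α) = M := by
    intro M
    rw [List.map_map]
    have he : ((fun g : Fin n → Bool => g ∘ ⇑α) ∘ (fun g => g ∘ ⇑α.symm)) = id := by
      funext g q
      simp [Function.comp]
    rw [he, List.map_id]
  have hhist : ∀ r, PG.phist S ⇑y r = (PG.phist (PG.S0 n) ⇑z r).map (fun g => g ∘ ⇑α.symm) := by
    intro r
    induction r with
    | zero => simp [PG.phist]
    | succ r ih =>
      show PG.phist S ⇑y r ++ [PG.tau (S (PG.phist S ⇑y r)) ⇑y] = _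
      rw [ih]
      show _ = (PG.phist (PG.S0 n) ⇑z r
          ++ [PG.tau (PG.S0 n (PG.phist (PG.S0 n) ⇑z r)) ⇑z]).map (fun g => g ∘ ⇑α.symm)
      rw [List.map_append]
      congr 1
      have hSv : S ((PG.phist (PG.S0 n) ⇑z r).map (fun g => g ∘ ⇑α.symm))
          = fun p => β (PG.S0 n (PG.phist (PG.S0 n) ⇑z r) (α.symm p)) := by
        rw [hS]
        simp only [hmaps]
      rw [hSv]
      simp only [List.map_cons, List.map_nil]
      congr 1
      funext p
      simp only [PG.tau, Function.comp]
      have hzp : z (α.symm p) = β.symm (y p) := by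
        simp [hz, Equiv.trans_apply, Equiv.apply_symm_apply]
      rw [hzp]
      rw [decide_eq_decide]
      constructor
      · intro h'; rw [← h']; simp
      · intro h'; rw [h']; simp
  obtain ⟨r, hr, hg⟩ := PG.win0 hz0
  refine ⟨r, hr, ?_⟩
  have : PG.pguess S ⇑y r = fun p => β (PG.pguess (PG.S0 n) ⇑z r (α.symm p)) := by
    show S (PG.phist S ⇑y r) = _
    rw [hhist r, hS]
    simp only [hmaps]
    rfl
  rw [this, hg]
  funext p
  show β (z (α.symm p)) = y p
  simp [hz, Equiv.trans_apply, Equiv.apply_symm_apply]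
end
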